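/- For every b ∈ (ω+1)^ω (with b(n) ≥ 1), Ed_b^⊥ ⪯_T R_b ⪯_T (Ed_b^⊥ ; 𝕀). Consequently b^{aLc}_{b,1} ≤ d(R_b) ≤ max{b^{aLc}_{b,1}, 𝔡} and min{d^{aLc}_{b,1}, 𝔟} ≤ b(R_b) ≤ d^{aLc}_{b,1}. -/

import Mathlib

open Cardinal Set Filter

/-- A relational system `⟨X, Y, R⟩`. -/
structure RelSys : Type 1 where
  X : Type
  Y : Type
  R : X → Y → Prop

/-- Tukey connection: `A ⪯_T B`. -/
def Tukey (A B : RelSys) : Prop :=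
  ∃ (φ : A.X → B.X) (ψ : B.Y → A.Y), ∀ x y, B.R (φ x) y → A.R x (ψ y)

/-- The bounding number `𝔟(A)` of a relational system. -/
noncomputable def bnum (A : RelSys) : Cardinal :=
  sInf {c | ∃ F : Set A.X, c = #↥F ∧ ∀ y, ∃ x ∈ F, ¬ A.R x y}

/-- The dominating number `𝔡(A)` of a relational system. -/
noncomputable def dnum (A : RelSys) : Cardinal :=
  sInf {c | ∃ D : Set A.Y, c = #↥D ∧ ∀ x, ∃ y ∈ D, A.R x y}

/-- An interval partition of `ω`, with `I_n = [e n, e (n+1))`. -/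
structure IntPart : Type where
  e : ℕ → ℕ
  zero : e 0 = 0
  mono : StrictMono e

/-- `f ⊏• (I, h)`. -/
def sqb (I : IntPart) (f h : ℕ → ℕ) : Prop :=
  ∀ᶠ n in atTop, ∃ k, I.e n ≤ k ∧ k < I.e (n + 1) ∧ f k = h k

/-- `∏ b` for `b ∈ (ω+1)^ω`. -/
def PbE (b : ℕ → ℕ∞) : Type := {f : ℕ → ℕ // ∀ n, (f n : ℕ∞) < b n}

/-- The relational system `R_b = ⟨∏b, 𝕀 × ∏b, ⊏•⟩`. -/
def Rb (b : ℕ → ℕ∞) : RelSys :=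
  ⟨PbE b, IntPart × PbE b, fun f p => sqb p.1 f.1 p.2.1⟩

/-- `Ed_b = ⟨∏b, ∏b, ≠^∞⟩`. -/
def Edb (b : ℕ → ℕ∞) : RelSys :=
  ⟨PbE b, PbE b, fun x y => ∀ᶠ n in atTop, x.1 n ≠ y.1 n⟩

/-- The dual system `Ed_b^⊥`: `y ⊏^⊥ x` iff `¬ (x ≠^∞ y)`. -/
def EdbDual (b : ℕ → ℕ∞) : RelSys :=
  ⟨PbE b, PbE b, fun y x => ¬ (∀ᶠ n in atTop, x.1 n ≠ y.1 n)⟩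

/-- `I ⊑ J` on interval partitions: for all but finitely many `n` there is `m`
with `I_m ⊆ J_n`. -/
def ISub (I J : IntPart) : Prop :=
  ∀ᶠ n in atTop, ∃ m, Set.Ico (I.e m) (I.e (m + 1)) ⊆ Set.Ico (J.e n) (J.e (n + 1))

/-- The relational system `⟨ω^ω, ω^ω, ≤*⟩`. -/
def OmOm : RelSys := ⟨ℕ → ℕ, ℕ → ℕ, fun x y => ∀ᶠ n in atTop, x n ≤ y n⟩




section Aux

open Classical in
/-- Greedy enumeration: each interval `[pickE P n, pickE P (n+1))` contains a witness of `P`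
whenever witnesses are cofinal. -/
noncomputable def pickE (P : ℕ → Prop) : ℕ → ℕ
  | 0 => 0
  | n + 1 => if H : ∃ k, pickE P n ≤ k ∧ P k then H.choose + 1 else pickE P n + 1

lemma pickE_strictMono (P : ℕ → Prop) : StrictMono (pickE P) := by
  apply strictMono_nat_of_lt_succ
  intro n
  rw [pickE]
  split
  · exact Nat.lt_succ_of_le (Exists.choose_spec ‹∃ k, pickE P n ≤ k ∧ P k›).1
  · exact Nat.lt_succ_self _

noncomputable def pickPart (P : ℕ → Prop) : IntPart := ⟨pickE P, rfl, pickE_strictMono P⟩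

lemma pickE_mem (P : ℕ → Prop) (hP : ∀ N, ∃ k, N ≤ k ∧ P k) (n : ℕ) :
    ∃ k, pickE P n ≤ k ∧ k < pickE P (n + 1) ∧ P k := by
  have H : ∃ k, pickE P n ≤ k ∧ P k := hP _
  rw [pickE, dif_pos H]
  exact ⟨H.choose, H.choose_spec.1, Nat.lt_succ_self _, H.choose_spec.2⟩

/-- Interval partition generated by a function `y` : `e (n+1) = max (e n + 1) (y (e n) + 1)`. -/
def mpE (y : ℕ → ℕ) : ℕ → ℕ
  | 0 => 0
  | n + 1 => max (mpE y n + 1) (y (mpE y n) + 1)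

def mPart (y : ℕ → ℕ) : IntPart :=
  ⟨mpE y, rfl, strictMono_nat_of_lt_succ fun n =>
    lt_of_lt_of_le (Nat.lt_succ_self _) (le_max_left _ _)⟩

lemma IntPart.le_e (I : IntPart) (n : ℕ) : n ≤ I.e n := I.mono.le_apply

lemma sqb_agree {I : IntPart} {f h : ℕ → ℕ} (hs : sqb I f h) (N : ℕ) :
    ∃ k, N ≤ k ∧ f k = h k := by
  obtain ⟨M, hM⟩ := eventually_atTop.1 hs
  obtain ⟨k, h1, _, h3⟩ := hM (max M N) (le_max_left _ _)
  exact ⟨k, le_trans (le_trans (le_max_right M N) (I.le_e _)) h1, h3⟩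

lemma not_sqb {I : IntPart} {f h : ℕ → ℕ} (hd : ∀ᶠ k in atTop, f k ≠ h k) : ¬ sqb I f h := by
  intro hs
  obtain ⟨M, hM⟩ := eventually_atTop.1 hd
  obtain ⟨k, hk, he⟩ := sqb_agree hs M
  exact hM k hk he

lemma not_ev_iff (x y : ℕ → ℕ) :
    (¬ ∀ᶠ n in atTop, x n ≠ y n) ↔ ∀ N, ∃ k, N ≤ k ∧ x k = y k := by
  rw [Filter.not_eventually]
  simp only [Filter.frequently_atTop, not_ne_iff, ge_iff_le]

lemma mPart_sqb {f h g y : ℕ → ℕ} (hg : ∀ n, n ≤ g n ∧ f (g n) = h (g n))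
    (hgy : ∀ᶠ n in atTop, g n ≤ y n) : sqb (mPart y) f h := by
  obtain ⟨M, hM⟩ := eventually_atTop.1 hgy
  refine eventually_atTop.2 ⟨M, fun n hn => ?_⟩
  have hEn : M ≤ mpE y n := hn.trans ((mPart y).le_e n)
  refine ⟨g (mpE y n), (hg _).1, ?_, (hg _).2⟩
  calc g (mpE y n) ≤ y (mpE y n) := hM _ hEn
    _ < y (mpE y n) + 1 := Nat.lt_succ_self _
    _ ≤ mpE y (n + 1) := le_max_right _ _

end Aux
section Main

variable {b : ℕ → ℕ∞}

open Classical in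
/-- the "flip" function, disagreeing with `x` wherever `1 < b n`. -/
noncomputable def flipF (b : ℕ → ℕ∞) (x : ℕ → ℕ) : ℕ → ℕ :=
  fun n => if x n = 0 ∧ 1 < b n then 1 else 0

lemma flipF_mem (hb : ∀ n, 1 ≤ b n) (x : ℕ → ℕ) (n : ℕ) : (flipF b x n : ℕ∞) < b n := by
  unfold flipF
  split
  · simpa using ‹x n = 0 ∧ 1 < b n›.2
  · simpa using lt_of_lt_of_le zero_lt_one (hb n)

lemma flipF_ne {x : ℕ → ℕ} {n : ℕ} (h1 : 1 < b n) : flipF b x n ≠ x n := by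
  unfold flipF
  split
  · rw [‹x n = 0 ∧ 1 < b n›.1]; exact one_ne_zero
  · have hx : ¬ (x n = 0 ∧ 1 < b n) := ‹_›
    intro h0
    exact hx ⟨h0.symm, h1⟩

lemma aleph0_le_dnum_OmOm : ℵ₀ ≤ dnum OmOm := by
  refine le_csInf ⟨#↥(univ : Set (ℕ → ℕ)), univ, rfl,
    fun x => ⟨x, mem_univ x, Eventually.of_forall fun n => le_rfl⟩⟩ ?_
  rintro c ⟨D, rfl, hD⟩
  by_contra hlt
  push_neg at hlt
  have hfin : D.Finite := Cardinal.lt_aleph0_iff_set_finite.1 hlt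
  obtain ⟨y, hyD, hy⟩ := hD (fun n => (hfin.toFinset.sup fun h => h n) + 1)
  obtain ⟨n, hn⟩ := hy.exists
  have hn' : (hfin.toFinset.sup fun h => h n) + 1 ≤ y n := hn
  have h2 : y n ≤ hfin.toFinset.sup fun h => h n :=
    Finset.le_sup (f := fun h => h n) (hfin.mem_toFinset.2 hyD)
  exact Nat.not_succ_le_self _ (hn'.trans h2)

/-- `Ed_b^⊥ ⪯_T R_b ⪯_T (Ed_b^⊥ ; 𝕀)`; consequently
`𝔟(Ed_b) ≤ 𝔡(R_b) ≤ max{𝔟(Ed_b), 𝔡}` and `min{𝔡(Ed_b), 𝔟} ≤ 𝔟(R_b) ≤ 𝔡(Ed_b)`. -/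
theorem stmt9 (b : ℕ → ℕ∞) (hb : ∀ n, 1 ≤ b n) :
    Tukey (EdbDual b) (Rb b) ∧
    Tukey (Rb b)
      ⟨PbE b × (PbE b → IntPart), PbE b × IntPart,
        fun p q => (EdbDual b).R p.1 q.1 ∧ ISub (p.2 q.1) q.2⟩ ∧
    bnum (Edb b) ≤ dnum (Rb b) ∧
    dnum (Rb b) ≤ max (bnum (Edb b)) (dnum OmOm) ∧
    min (dnum (Edb b)) (bnum OmOm) ≤ bnum (Rb b) ∧
    bnum (Rb b) ≤ dnum (Edb b) := by
  have hzb : ∀ n, ((0 : ℕ) : ℕ∞) < b n := fun n => by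
    simpa using lt_of_lt_of_le zero_lt_one (hb n)
  have h56 : min (dnum (Edb b)) (bnum OmOm) ≤ bnum (Rb b) ∧ bnum (Rb b) ≤ dnum (Edb b) := by
    by_cases hT : ∀ N, ∃ n, N ≤ n ∧ b n = 1
    · -- the case where `b n = 1` cofinally often: everything degenerates
      set z : PbE b := ⟨fun _ => 0, fun n => hzb n⟩ with hz
      have hp : ∀ f : PbE b, sqb (pickPart fun k => b k = 1) f.1 z.1 := by
        intro f
        refine Eventually.of_forall fun n => ?_
        obtain ⟨k, h1k, h2k, h3k⟩ := pickE_mem _ hT n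
        refine ⟨k, h1k, h2k, ?_⟩
        have hlt := f.2 k
        rw [h3k] at hlt
        have h0 : f.1 k = 0 := by exact_mod_cast Nat.lt_one_iff.1 (by exact_mod_cast hlt)
        simp [h0, hz]
      have hEd0 : dnum (Edb b) = 0 := by
        have hemp : {c | ∃ D : Set (Edb b).Y, c = #↥D ∧ ∀ x, ∃ y ∈ D, (Edb b).R x y} = ∅ := by
          rw [Set.eq_empty_iff_forall_notMem]
          rintro c ⟨D, -, hD⟩
          obtain ⟨y, -, hy⟩ := hD z
          obtain ⟨M, hM⟩ := eventually_atTop.1 hy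
          obtain ⟨k, hk, he⟩ := sqb_agree (hp y) M
          exact hM k hk he.symm
        unfold dnum
        rw [hemp, Cardinal.sInf_empty]
      have hRb0 : bnum (Rb b) = 0 := by
        have hemp : {c | ∃ F : Set (Rb b).X, c = #↥F ∧ ∀ y, ∃ x ∈ F, ¬ (Rb b).R x y} = ∅ := by
          rw [Set.eq_empty_iff_forall_notMem]
          rintro c ⟨F, -, hF⟩
          obtain ⟨f, -, hnf⟩ := hF ((pickPart fun k => b k = 1, z) : (Rb b).Y)
          exact hnf (hp f)
        unfold bnum
        rw [hemp, Cardinal.sInf_empty]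
      constructor
      · exact le_trans (le_trans (min_le_left _ _) hEd0.le) zero_le
      · rw [hRb0]; exact zero_le
    · push_neg at hT
      obtain ⟨N, hN⟩ := hT
      have hb1 : ∀ n, N ≤ n → 1 < b n := fun n hn =>
        lt_of_le_of_ne (hb n) (fun h => hN n hn h.symm)
      have hflip : ∀ x : ℕ → ℕ, ∀ᶠ k in atTop, flipF b x k ≠ x k :=
        fun x => eventually_atTop.2 ⟨N, fun k hk => flipF_ne (hb1 k hk)⟩
      constructor
      · -- Part 5
        have hne : {c | ∃ F : Set (Rb b).X, c = #↥F ∧ ∀ y, ∃ x ∈ F, ¬ (Rb b).R x y}.Nonempty := by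
          refine ⟨_, univ, rfl, fun p => ⟨⟨flipF b p.2.1, flipF_mem hb _⟩, mem_univ _, ?_⟩⟩
          exact not_sqb (hflip p.2.1)
        refine le_csInf hne ?_
        rintro c ⟨F, rfl, hF⟩
        by_contra hc
        push_neg at hc
        rw [lt_min_iff] at hc
        obtain ⟨hc1, hc2⟩ := hc
        have hnotdom : ¬ ∀ x, ∃ y ∈ F, (Edb b).R x y := fun hdom =>
          absurd (csInf_le (OrderBot.bddBelow _) ⟨F, rfl, hdom⟩ : dnum (Edb b) ≤ _)
            (not_le.2 hc1)
        push_neg at hnotdom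
        obtain ⟨h, hh⟩ := hnotdom
        have hag : ∀ y : ↥F, ∀ n, ∃ k, n ≤ k ∧ h.1 k = y.1.1 k :=
          fun y => (not_ev_iff h.1 y.1.1).1 (hh y.1 y.2)
        have hGnotunb : ¬ ∀ yy : OmOm.Y, ∃ x ∈ Set.range
            (fun (y : ↥F) (n : ℕ) => (hag y n).choose), ¬ OmOm.R x yy := fun hu =>
          absurd (csInf_le (OrderBot.bddBelow _) ⟨_, rfl, hu⟩ : bnum OmOm ≤ _)
            (not_le.2 (lt_of_le_of_lt Cardinal.mk_range_le hc2))
        push_neg at hGnotunb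
        obtain ⟨yy, hyy⟩ := hGnotunb
        obtain ⟨f0, hf0, hnsq⟩ := hF ((mPart yy, h) : (Rb b).Y)
        apply hnsq
        show sqb (mPart yy) f0.1 h.1
        exact mPart_sqb (g := fun n => (hag ⟨f0, hf0⟩ n).choose)
          (fun n => ⟨(hag ⟨f0, hf0⟩ n).choose_spec.1, ((hag ⟨f0, hf0⟩ n).choose_spec.2).symm⟩)
          (hyy _ ⟨⟨f0, hf0⟩, rfl⟩)
      · -- Part 6
        have hne : {c | ∃ D : Set (Edb b).Y, c = #↥D ∧ ∀ x, ∃ y ∈ D, (Edb b).R x y}.Nonempty := by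
          refine ⟨_, univ, rfl, fun x => ⟨⟨flipF b x.1, flipF_mem hb _⟩, mem_univ _, ?_⟩⟩
          exact (hflip x.1).mono fun k hk => Ne.symm hk
        refine le_csInf hne ?_
        rintro c ⟨D, rfl, hD⟩
        refine csInf_le (OrderBot.bddBelow _) ⟨D, rfl, fun p => ?_⟩
        obtain ⟨y, hyD, hy⟩ := hD p.2
        exact ⟨y, hyD, not_sqb (hy.mono fun k hk => Ne.symm hk)⟩
  refine ⟨?_, ?_, ?_, ?_, ?_, ?_⟩
  -- Part 1 : EdbDual ⪯_T Rb
  · refine ⟨id, fun p => p.2, fun x p hR => ?_⟩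
    show ¬ ∀ᶠ n in atTop, p.2.1 n ≠ x.1 n
    rw [not_ev_iff]
    intro N
    obtain ⟨k, hk, he⟩ := sqb_agree hR N
    exact ⟨k, hk, he.symm⟩
  -- Part 2 : Rb ⪯_T (EdbDual ; 𝕀)
  · refine ⟨fun f => (f, fun y => pickPart fun k => f.1 k = y.1 k),
      fun q => (q.2, q.1), fun f q hR => ?_⟩
    obtain ⟨h1, h2⟩ := hR
    have h1' : ¬ ∀ᶠ n in atTop, q.1.1 n ≠ f.1 n := h1
    have hag : ∀ N, ∃ k, N ≤ k ∧ f.1 k = q.1.1 k := by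
      rw [not_ev_iff] at h1'
      intro N
      obtain ⟨k, hk, he⟩ := h1' N
      exact ⟨k, hk, he.symm⟩
    have h2' : ISub (pickPart fun k => f.1 k = q.1.1 k) q.2 := h2
    show sqb q.2 f.1 q.1.1
    unfold ISub at h2'
    refine h2'.mono fun n hn => ?_
    obtain ⟨m, hm⟩ := hn
    obtain ⟨k, h1k, h2k, h3k⟩ := pickE_mem _ hag m
    have hmem := hm (Set.mem_Ico.2 ⟨h1k, h2k⟩)
    rw [Set.mem_Ico] at hmem
    exact ⟨k, hmem.1, hmem.2, h3k⟩
  -- Part 3 : bnum Edb ≤ dnum Rb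
  · have hne : {c | ∃ D : Set (Rb b).Y, c = #↥D ∧ ∀ x, ∃ y ∈ D, (Rb b).R x y}.Nonempty := by
      refine ⟨_, univ, rfl, fun f => ⟨(⟨id, rfl, strictMono_id⟩, f), mem_univ _, ?_⟩⟩
      exact Eventually.of_forall fun n => ⟨n, le_rfl, Nat.lt_succ_self n, rfl⟩
    refine le_csInf hne ?_
    rintro c ⟨D, rfl, hD⟩
    have hkey : bnum (Edb b) ≤ #↥((fun p : (Rb b).Y => p.2) '' D) := by
      refine csInf_le (OrderBot.bddBelow _) ⟨(fun p : (Rb b).Y => p.2) '' D, rfl, fun y => ?_⟩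
      obtain ⟨p, hp, hsq⟩ := hD y
      refine ⟨p.2, ⟨p, hp, rfl⟩, ?_⟩
      show ¬ ∀ᶠ n in atTop, p.2.1 n ≠ y.1 n
      rw [not_ev_iff]
      intro N
      obtain ⟨k, hk, he⟩ := sqb_agree hsq N
      exact ⟨k, hk, he.symm⟩
    exact hkey.trans Cardinal.mk_image_le
  -- Part 4 : dnum Rb ≤ max (bnum Edb) (dnum OmOm)
  · have hne1 : {c | ∃ F : Set (Edb b).X, c = #↥F ∧ ∀ y, ∃ x ∈ F, ¬ (Edb b).R x y}.Nonempty := by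
      refine ⟨_, univ, rfl, fun y => ⟨y, mem_univ _, ?_⟩⟩
      exact (not_ev_iff y.1 y.1).2 fun N => ⟨N, le_rfl, rfl⟩
    have hne2 : {c | ∃ D : Set OmOm.Y, c = #↥D ∧ ∀ x, ∃ y ∈ D, OmOm.R x y}.Nonempty :=
      ⟨_, univ, rfl, fun x => ⟨x, mem_univ x, Eventually.of_forall fun n => le_rfl⟩⟩
    obtain ⟨D₁, h1c, h1⟩ := csInf_mem hne1
    obtain ⟨D₂, h2c, h2⟩ := csInf_mem hne2
    have hdom : ∀ f : (Rb b).X, ∃ p ∈ Set.range (fun q : ↥D₁ × ↥D₂ =>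
        ((mPart q.2.1, q.1.1) : (Rb b).Y)), (Rb b).R f p := by
      intro f
      obtain ⟨x, hxD, hx⟩ := h1 f
      have hag : ∀ N, ∃ k, N ≤ k ∧ x.1 k = f.1 k := (not_ev_iff x.1 f.1).1 hx
      obtain ⟨y, hyD, hy⟩ := h2 (fun n => (hag n).choose)
      refine ⟨(mPart y, x), ⟨(⟨x, hxD⟩, ⟨y, hyD⟩), rfl⟩, ?_⟩
      show sqb (mPart y) f.1 x.1
      exact mPart_sqb (fun n => ⟨(hag n).choose_spec.1, ((hag n).choose_spec.2).symm⟩) hy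
    have hle : dnum (Rb b) ≤ #↥(Set.range (fun q : ↥D₁ × ↥D₂ =>
        ((mPart q.2.1, q.1.1) : (Rb b).Y))) :=
      csInf_le (OrderBot.bddBelow _) ⟨_, rfl, hdom⟩
    refine hle.trans (le_trans Cardinal.mk_range_le ?_)
    rw [Cardinal.mk_prod, Cardinal.lift_id, Cardinal.lift_id, ← h1c, ← h2c]
    exact (Cardinal.mul_le_max _ _).trans
      (max_le le_rfl (aleph0_le_dnum_OmOm.trans (le_max_right _ _)))
  -- Part 5 : min (dnum Edb) (bnum OmOm) ≤ bnum Rb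
  case _ => exact h56.1
  case _ => exact h56.2
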